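/- Let P be the set of 4 points consisting of the vertices of a triangle together with one point strictly inside the triangle. Then any coloring of P with 3 colors admits a half-plane containing exactly 2 points of P, both of the same color; i.e., 4 colors are necessary for a 2-proper half-plane coloring of P. -/

import Mathlib

def halfPlane (a b c : ℝ) : Set (ℝ × ℝ) := {p | a * p.1 + b * p.2 ≤ c}

lemma key (p q r x : ℝ × ℝ)
    (hcol : ¬ Collinear ℝ ({p, q, r} : Set (ℝ × ℝ)))
    (hx : x ∈ interior (convexHull ℝ ({p, q, r} : Set (ℝ × ℝ)))) :
    ∃ a b c : ℝ, (a, b) ≠ ((0:ℝ), (0:ℝ)) ∧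
      a * p.1 + b * p.2 = c ∧ a * q.1 + b * q.2 = c ∧
      c < a * x.1 + b * x.2 ∧ a * x.1 + b * x.2 < a * r.1 + b * r.2 := by
  set d : ℝ := (q.1 - p.1) * (r.2 - p.2) - (q.2 - p.2) * (r.1 - p.1) with hd
  have hpq : p ≠ q := by
    rintro rfl
    exact hcol (Collinear.subset (by intro z hz; simp at hz ⊢; tauto) (collinear_pair ℝ p r))
  have hdne : d ≠ 0 := by
    intro h0
    apply hcol
    have hmem : p ∈ ({p, q, r} : Set (ℝ × ℝ)) := by simp
    rw [collinear_iff_of_mem hmem]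
    refine ⟨q - p, ?_⟩
    intro z hz
    simp only [Set.mem_insert_iff, Set.mem_singleton_iff] at hz
    rcases hz with h | h | h
    · exact ⟨0, by rw [h]; simp⟩
    · exact ⟨1, by rw [h]; simp⟩
    · rcases eq_or_ne (q.1 - p.1) 0 with h1 | h1
      · have h2 : q.2 - p.2 ≠ 0 := by
          intro h2; apply hpq; ext <;> linarith
        have hr1 : r.1 = p.1 := by
          have h3 : (q.2 - p.2) * (r.1 - p.1) = (q.1 - p.1) * (r.2 - p.2) - d := by
            rw [hd]; ring
          rw [h0, h1, zero_mul, sub_zero] at h3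
          rcases mul_eq_zero.1 h3 with h' | h'
          · exact absurd h' h2
          · linarith
        refine ⟨(r.2 - p.2) / (q.2 - p.2), ?_⟩
        rw [h]
        have : ((r.2 - p.2) / (q.2 - p.2)) • (q - p) +ᵥ p
            = (((r.2 - p.2) / (q.2 - p.2)) * (q.1 - p.1) + p.1,
               ((r.2 - p.2) / (q.2 - p.2)) * (q.2 - p.2) + p.2) := by
          ext <;> simp <;> ring
        rw [this]
        ext
        · simp [h1, hr1]
        · simp; field_simp; ring
      · refine ⟨(r.1 - p.1) / (q.1 - p.1), ?_⟩
        rw [h]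
        have : ((r.1 - p.1) / (q.1 - p.1)) • (q - p) +ᵥ p
            = (((r.1 - p.1) / (q.1 - p.1)) * (q.1 - p.1) + p.1,
               ((r.1 - p.1) / (q.1 - p.1)) * (q.2 - p.2) + p.2) := by
          ext <;> simp <;> ring
        rw [this]
        have hr2 : r.2 - p.2 = (r.1 - p.1) / (q.1 - p.1) * (q.2 - p.2) := by
          field_simp; nlinarith [h0, hd]
        ext
        · simp; field_simp; ring
        · simp; linarith [hr2]
  set a : ℝ := d * (-(q.2 - p.2)) with ha
  set b : ℝ := d * (q.1 - p.1) with hb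
  set c : ℝ := a * p.1 + b * p.2 with hc
  have hdd : 0 < d * d := mul_self_pos.2 hdne
  have hab : (a, b) ≠ ((0:ℝ), (0:ℝ)) := by
    intro h
    have ha0 : a = 0 := congrArg Prod.fst h
    have hb0 : b = 0 := congrArg Prod.snd h
    apply hpq
    have h1 : q.2 - p.2 = 0 := by
      rcases mul_eq_zero.1 ha0 with h' | h'
      · exact absurd h' hdne
      · linarith
    have h2 : q.1 - p.1 = 0 := by
      rcases mul_eq_zero.1 hb0 with h' | h'
      · exact absurd h' hdne
      · linarith
    ext <;> linarith
  have hq : a * q.1 + b * q.2 = c := by rw [hc, ha, hb]; ring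
  have hr : a * r.1 + b * r.2 = c + d * d := by rw [hc, ha, hb, hd]; ring
  set F : (ℝ × ℝ) →L[ℝ] ℝ :=
    a • (ContinuousLinearMap.fst ℝ ℝ ℝ) + b • (ContinuousLinearMap.snd ℝ ℝ ℝ) with hF
  have hFz : ∀ z : ℝ × ℝ, F z = a * z.1 + b * z.2 := by intro z; simp [hF]
  have hsurj : Function.Surjective F := by
    intro y
    rcases eq_or_ne a 0 with h | h
    · have hb' : b ≠ 0 := by
        intro hb0; exact hab (by rw [Prod.mk.injEq]; exact ⟨h, hb0⟩)
      exact ⟨(0, y / b), by rw [hFz]; field_simp; ring⟩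
    · exact ⟨(y / a, 0), by rw [hFz]; field_simp; ring⟩
  have hsub1 : convexHull ℝ ({p, q, r} : Set (ℝ × ℝ)) ⊆ F ⁻¹' (Set.Ici c) := by
    apply convexHull_min
    · intro z hz
      simp only [Set.mem_insert_iff, Set.mem_singleton_iff] at hz
      simp only [Set.mem_preimage, hFz, Set.mem_Ici]
      rcases hz with h | h | h <;> rw [h]
      all_goals first
        | exact le_of_eq hc
        | exact le_of_eq hq.symm
        | (rw [hr]; linarith)
    · exact (convex_Ici c).linear_preimage (F : (ℝ × ℝ) →ₗ[ℝ] ℝ)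
  have hsub2 : convexHull ℝ ({p, q, r} : Set (ℝ × ℝ)) ⊆ F ⁻¹' (Set.Iic (c + d * d)) := by
    apply convexHull_min
    · intro z hz
      simp only [Set.mem_insert_iff, Set.mem_singleton_iff] at hz
      simp only [Set.mem_preimage, hFz, Set.mem_Iic]
      rcases hz with h | h | h <;> rw [h]
      all_goals first
        | (rw [← hc]; linarith)
        | (rw [hq]; linarith)
        | rw [hr]
    · exact (convex_Iic _).linear_preimage (F : (ℝ × ℝ) →ₗ[ℝ] ℝ)
  have hx1 := interior_mono hsub1 hx
  have hx2 := interior_mono hsub2 hx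
  rw [F.interior_preimage hsurj, interior_Ici] at hx1
  rw [F.interior_preimage hsurj, interior_Iic] at hx2
  rw [Set.mem_preimage, Set.mem_Ioi, hFz] at hx1
  rw [Set.mem_preimage, Set.mem_Iio, hFz] at hx2
  exact ⟨a, b, c, hab, hc.symm, hq, hx1, by rw [hr]; exact hx2⟩

lemma main_aux (p q r x : ℝ × ℝ)
    (hcol : ¬ Collinear ℝ ({p, q, r} : Set (ℝ × ℝ)))
    (hx : x ∈ interior (convexHull ℝ ({p, q, r} : Set (ℝ × ℝ))))
    (f : ℝ × ℝ → Fin 3) (hfs : f p = f q ∨ f r = f x) :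
    ∃ a b c : ℝ, (a, b) ≠ ((0 : ℝ), (0 : ℝ)) ∧
      ∃ u v : ℝ × ℝ, u ≠ v ∧
        u ∈ ({p, q, r, x} : Set (ℝ × ℝ)) ∧ v ∈ ({p, q, r, x} : Set (ℝ × ℝ)) ∧
        u ∈ halfPlane a b c ∧ v ∈ halfPlane a b c ∧ f u = f v ∧
        ∀ w ∈ ({p, q, r, x} : Set (ℝ × ℝ)), w ∈ halfPlane a b c → w = u ∨ w = v := by
  obtain ⟨a, b, c, hab, hp, hq, hx1, hx2⟩ := key p q r x hcol hx
  have hpq : p ≠ q := by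
    rintro rfl
    exact hcol (Collinear.subset (by intro z hz; simp at hz ⊢; tauto) (collinear_pair ℝ p r))
  rcases hfs with hf | hf
  · refine ⟨a, b, c, hab, p, q, hpq, by simp, by simp, le_of_eq hp, le_of_eq hq, hf, ?_⟩
    intro w hw hwh
    simp only [Set.mem_insert_iff, Set.mem_singleton_iff] at hw
    simp only [halfPlane, Set.mem_setOf_eq] at hwh
    rcases hw with h | h | h | h
    · exact Or.inl h
    · exact Or.inr h
    · exfalso; rw [h] at hwh; linarith
    · exfalso; rw [h] at hwh; linarith
  · refine ⟨-a, -b, -(a * x.1 + b * x.2), ?_, r, x, ?_, by simp, by simp, ?_, ?_, hf, ?_⟩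
    · intro h
      have ha0 : -a = 0 := congrArg Prod.fst h
      have hb0 : -b = 0 := congrArg Prod.snd h
      exact hab (by rw [Prod.mk.injEq]; constructor <;> linarith)
    · intro h; rw [h] at hx2; linarith
    · show -a * r.1 + -b * r.2 ≤ -(a * x.1 + b * x.2); linarith
    · show -a * x.1 + -b * x.2 ≤ -(a * x.1 + b * x.2); linarith
    · intro w hw hwh
      simp only [Set.mem_insert_iff, Set.mem_singleton_iff] at hw
      simp only [halfPlane, Set.mem_setOf_eq] at hwh
      rcases hw with h | h | h | h
      · exfalso; rw [h] at hwh; linarith [hp, hx1]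
      · exfalso; rw [h] at hwh; linarith [hq, hx1]
      · exact Or.inl h
      · exact Or.inr h

theorem stmt8 (q1 q2 q3 x : ℝ × ℝ)
    (htri : ¬ Collinear ℝ ({q1, q2, q3} : Set (ℝ × ℝ)))
    (hx : x ∈ interior (convexHull ℝ ({q1, q2, q3} : Set (ℝ × ℝ))))
    (f : ℝ × ℝ → Fin 3) :
    ∃ a b c : ℝ, (a, b) ≠ ((0 : ℝ), (0 : ℝ)) ∧
      ∃ u v : ℝ × ℝ, u ≠ v ∧
        u ∈ ({q1, q2, q3, x} : Set (ℝ × ℝ)) ∧ v ∈ ({q1, q2, q3, x} : Set (ℝ × ℝ)) ∧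
        u ∈ halfPlane a b c ∧ v ∈ halfPlane a b c ∧ f u = f v ∧
        ∀ w ∈ ({q1, q2, q3, x} : Set (ℝ × ℝ)), w ∈ halfPlane a b c → w = u ∨ w = v := by
  have t1 : ({q1, q3, q2} : Set (ℝ × ℝ)) = {q1, q2, q3} := by ext z; simp; tauto
  have t2 : ({q2, q3, q1} : Set (ℝ × ℝ)) = {q1, q2, q3} := by ext z; simp; tauto
  have e1 : ({q1, q3, q2, x} : Set (ℝ × ℝ)) = {q1, q2, q3, x} := by ext z; simp; tauto
  have e2 : ({q2, q3, q1, x} : Set (ℝ × ℝ)) = {q1, q2, q3, x} := by ext z; simp; tauto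
  by_cases h12 : f q1 = f q2
  · exact main_aux q1 q2 q3 x htri hx f (Or.inl h12)
  by_cases h13 : f q1 = f q3
  · have := main_aux q1 q3 q2 x (by rw [t1]; exact htri) (by rw [t1]; exact hx) f (Or.inl h13)
    rwa [e1] at this
  by_cases h23 : f q2 = f q3
  · have := main_aux q2 q3 q1 x (by rw [t2]; exact htri) (by rw [t2]; exact hx) f (Or.inl h23)
    rwa [e2] at this
  by_cases h1x : f q1 = f x
  · have := main_aux q2 q3 q1 x (by rw [t2]; exact htri) (by rw [t2]; exact hx) f (Or.inr h1x)
    rwa [e2] at this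
  by_cases h2x : f q2 = f x
  · have := main_aux q1 q3 q2 x (by rw [t1]; exact htri) (by rw [t1]; exact hx) f (Or.inr h2x)
    rwa [e1] at this
  by_cases h3x : f q3 = f x
  · exact main_aux q1 q2 q3 x htri hx f (Or.inr h3x)
  exfalso
  have i1 := (f q1).isLt
  have i2 := (f q2).isLt
  have i3 := (f q3).isLt
  have i4 := (f x).isLt
  simp only [Fin.ext_iff] at h12 h13 h23 h1x h2x h3x
  omega
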